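/- arXiv:1204.4503 — 3 statements merged into one kernel-verified Lean document; each statement's English description precedes it below -/
import Mathlib

section
/- Let q ≥ 3 be an integer and let β_s = β_s(q). Then the function s ↦ D_{β_s}(s) has exactly one zero s* in the interval (1/q, 1]; moreover (d/ds) D_{β_s}(s)|_{s=s*} = 0 and (d²/ds²) D_{β_s}(s)|_{s=s*} < 0. -/
/-- The drift function `D_β(x) = −x + (1 + (q−1) e^{2β(1−qx)/(q−1)})⁻¹`,
equivalently `−x + e^{2βx}/(e^{2βx} + (q−1)e^{2β(1−x)/(q−1)})`. -/
noncomputable def Dfun (q : ℕ) (β x : ℝ) : ℝ :=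
  -x + (1 + ((q : ℝ) - 1) * Real.exp (2 * β * (1 - (q : ℝ) * x) / ((q : ℝ) - 1)))⁻¹

/-- The dynamical (spinodal) critical inverse temperature
`β_s(q) = sup {β ≥ 0 : D_β(x) ≠ 0 for all x ∈ (1/q,1)}`. -/
noncomputable def betaS (q : ℕ) : ℝ :=
  sSup {β : ℝ | 0 ≤ β ∧ ∀ x ∈ Set.Ioo (1 / (q : ℝ)) 1, Dfun q β x ≠ 0}

open Real Set


noncomputable def Lf (Q x : ℝ) : ℝ := Real.log ((Q-1) * x / (1 - x))
noncomputable def psf (Q x : ℝ) : ℝ := (Q*x - 1)/(x*(1-x)) - Q * Lf Q x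
noncomputable def phf (Q x : ℝ) : ℝ := (Q-1) * Lf Q x / (2*(Q*x-1))

lemma hasDerivAt_Lf {Q x : ℝ} (hQ : 3 ≤ Q) (hx : x ∈ Ioo (0:ℝ) 1) :
    HasDerivAt (Lf Q) (1/(x*(1-x))) x := by
  obtain ⟨hx0, hx1⟩ := hx
  have h1 : (0:ℝ) < 1 - x := by linarith
  have hQ1 : (0:ℝ) < Q - 1 := by linarith
  have hu : HasDerivAt (fun y => (Q-1) * y / (1 - y)) ((Q-1)/(1-x)^2) x := by
    have hnum : HasDerivAt (fun y => (Q-1) * y) (Q-1) x := by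
      simpa using (hasDerivAt_id x).const_mul (Q-1)
    have hden : HasDerivAt (fun y => 1 - y) (-1) x := by
      simpa using (hasDerivAt_id x).const_sub 1
    have := hnum.div hden (by linarith)
    refine this.congr_deriv ?_
    field_simp
    ring
  have harg : (Q-1) * x / (1 - x) ≠ 0 := by positivity
  have := hu.log harg
  refine this.congr_deriv ?_
  field_simp

lemma hasDerivAt_psf {Q x : ℝ} (hQ : 3 ≤ Q) (hx : x ∈ Ioo (0:ℝ) 1) :
    HasDerivAt (psf Q) ((2*Q*x^2-(Q+2)*x+1)/(x^2*(1-x)^2)) x := by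
  obtain ⟨hx0, hx1⟩ := hx
  have h1 : (0:ℝ) < 1 - x := by linarith
  have hnum : HasDerivAt (fun y => Q * y - 1) Q x := by
    simpa using ((hasDerivAt_id x).const_mul Q).sub_const 1
  have hden : HasDerivAt (fun y => y * (1 - y)) (1 - 2*x) x := by
    have := (hasDerivAt_id x).mul ((hasDerivAt_id x).const_sub 1)
    refine this.congr_deriv ?_
    simp [id]
    ring
  have hfrac := hnum.div hden (by positivity)
  have hlog := (hasDerivAt_Lf hQ ⟨hx0, hx1⟩).const_mul Q
  have := hfrac.sub hlog
  refine this.congr_deriv ?_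
  field_simp
  ring

lemma hasDerivAt_phf {Q x : ℝ} (hQ : 3 ≤ Q) (hx : x ∈ Ioo (1/Q) 1) :
    HasDerivAt (phf Q) ((Q-1) * psf Q x / (2*(Q*x-1)^2)) x := by
  obtain ⟨hx0, hx1⟩ := hx
  have hQ0 : (0:ℝ) < Q := by linarith
  have hxpos : 0 < x := lt_trans (by positivity) hx0
  have h1 : (0:ℝ) < 1 - x := by linarith
  have hQx : 0 < Q*x - 1 := by
    have := (div_lt_iff₀ hQ0).mp hx0
    linarith
  have hnum : HasDerivAt (fun y => (Q-1) * Lf Q y) ((Q-1) * (1/(x*(1-x)))) x :=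
    (hasDerivAt_Lf hQ ⟨hxpos, hx1⟩).const_mul (Q-1)
  have hden : HasDerivAt (fun y => 2*(Q*y-1)) (2*Q) x := by
    simpa using (((hasDerivAt_id x).const_mul Q).sub_const 1).const_mul 2
  have := hnum.div hden (by positivity)
  refine this.congr_deriv ?_
  unfold psf
  field_simp

noncomputable def Ef (Q β x : ℝ) : ℝ := (Q-1) * Real.exp (2*β*(1-Q*x)/(Q-1))
noncomputable def Dp (Q β x : ℝ) : ℝ :=
  -1 + 2*β*Q/(Q-1) * Ef Q β x / (1 + Ef Q β x)^2
noncomputable def Dpp (Q β x : ℝ) : ℝ :=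
  (2*β*Q/(Q-1))^2 * Ef Q β x * (Ef Q β x - 1) / (1 + Ef Q β x)^3

lemma Ef_pos {Q β x : ℝ} (hQ : 3 ≤ Q) : 0 < Ef Q β x := by
  unfold Ef
  have : (0:ℝ) < Q - 1 := by linarith
  positivity

lemma F_pos {Q β x : ℝ} (hQ : 3 ≤ Q) : 0 < 1 + Ef Q β x := by
  have := Ef_pos (β := β) (x := x) hQ
  linarith

lemma hasDerivAt_Ef {Q β x : ℝ} (hQ : 3 ≤ Q) :
    HasDerivAt (fun y => Ef Q β y) (-(2*β*Q/(Q-1)) * Ef Q β x) x := by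
  have hQ1 : (0:ℝ) < Q - 1 := by linarith
  have harg : HasDerivAt (fun y => 2*β*(1-Q*y)/(Q-1)) (2*β*(-Q)/(Q-1)) x := by
    simpa using ((((hasDerivAt_id x).const_mul Q).const_sub 1).const_mul (2*β)).div_const (Q-1)
  have := (harg.exp).const_mul (Q-1)
  refine this.congr_deriv ?_
  unfold Ef
  field_simp

lemma hasDerivAt_D {q : ℕ} (hq : 3 ≤ q) (β x : ℝ) :
    HasDerivAt (fun y => Dfun q β y) (Dp q β x) x := by
  have hQ : (3:ℝ) ≤ (q:ℝ) := by exact_mod_cast hq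
  have hF := F_pos (β := β) (x := x) hQ
  have hE := hasDerivAt_Ef (β := β) (x := x) hQ
  have hFd : HasDerivAt (fun y => 1 + Ef (q:ℝ) β y) (-(2*β*q/((q:ℝ)-1)) * Ef q β x) x :=
    hE.const_add 1
  have hinv := hFd.inv (by linarith)
  have hD := ((hasDerivAt_id x).neg).add hinv
  have hfun : (fun y => Dfun q β y) = fun y => -y + (1 + Ef (q:ℝ) β y)⁻¹ := by
    funext y
    unfold Dfun Ef
    ring_nf
  rw [hfun]
  refine hD.congr_deriv ?_
  unfold Dp
  field_simp

lemma hasDerivAt_Dp {q : ℕ} (hq : 3 ≤ q) (β x : ℝ) :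
    HasDerivAt (fun y => Dp q β y) (Dpp q β x) x := by
  have hQ : (3:ℝ) ≤ (q:ℝ) := by exact_mod_cast hq
  have hQ1 : (0:ℝ) < (q:ℝ) - 1 := by linarith
  have hF := F_pos (β := β) (x := x) hQ
  have hE0 := Ef_pos (β := β) (x := x) hQ
  have hE := hasDerivAt_Ef (β := β) (x := x) hQ
  have hFd : HasDerivAt (fun y => (1 + Ef (q:ℝ) β y)^2)
      (2 * (1 + Ef q β x) * (-(2*β*q/((q:ℝ)-1)) * Ef q β x)) x := by
    have := (hE.const_add 1).pow 2
    refine this.congr_deriv ?_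
    ring
  have hquot := (hE.const_mul (2*β*q/((q:ℝ)-1))).div hFd (by positivity)
  have := hquot.const_add (-1)
  refine this.congr_deriv ?_
  unfold Dpp
  field_simp
  ring

lemma D_zero_iff {q : ℕ} (hq : 3 ≤ q) {β x : ℝ} (hx : x ∈ Ioo (1/(q:ℝ)) 1) :
    Dfun q β x = 0 ↔ β = phf q x := by
  obtain ⟨hx0, hx1⟩ := hx
  have hQ : (3:ℝ) ≤ (q:ℝ) := by exact_mod_cast hq
  have hQ0 : (0:ℝ) < q := by linarith
  have hQ1 : (0:ℝ) < (q:ℝ) - 1 := by linarith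
  have hxpos : 0 < x := lt_trans (by positivity) hx0
  have h1x : (0:ℝ) < 1 - x := by linarith
  have hQx : 0 < (q:ℝ)*x - 1 := by
    have := (div_lt_iff₀ hQ0).mp hx0
    linarith
  have hr : (0:ℝ) < (1-x)/(((q:ℝ)-1)*x) := by positivity
  have step1 : Dfun q β x = 0 ↔
      Real.exp (2*β*(1-(q:ℝ)*x)/((q:ℝ)-1)) = (1-x)/(((q:ℝ)-1)*x) := by
    unfold Dfun
    set e := Real.exp (2*β*(1-(q:ℝ)*x)/((q:ℝ)-1)) with he
    have he0 : 0 < e := Real.exp_pos _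
    have hden : 0 < 1 + ((q:ℝ)-1)*e := by positivity
    constructor
    · intro h
      have hxinv : (1 + ((q:ℝ)-1)*e)⁻¹ = x := by linarith
      have : 1 + ((q:ℝ)-1)*e = x⁻¹ := by
        rw [← hxinv, inv_inv]
      field_simp at this ⊢
      nlinarith [this]
    · intro h
      have : ((q:ℝ)-1)*e = (1-x)/x := by
        rw [h]; field_simp
      have hsum : 1 + ((q:ℝ)-1)*e = 1/x := by
        rw [this]; field_simp; ring
      rw [hsum]
      field_simp
      ring
  have step2 : Real.exp (2*β*(1-(q:ℝ)*x)/((q:ℝ)-1)) = (1-x)/(((q:ℝ)-1)*x) ↔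
      2*β*(1-(q:ℝ)*x)/((q:ℝ)-1) = Real.log ((1-x)/(((q:ℝ)-1)*x)) := by
    constructor
    · intro h
      rw [← h, Real.log_exp]
    · intro h
      rw [h, Real.exp_log hr]
  have hloginv : Real.log ((1-x)/(((q:ℝ)-1)*x)) = - Lf q x := by
    unfold Lf
    rw [← Real.log_inv]
    congr 1
    field_simp
  rw [step1, step2, hloginv]
  unfold phf
  rw [eq_div_iff (by positivity), div_eq_iff (by positivity)]
  constructor
  · intro h; linarith [h]
  · intro h; linarith [h]

lemma psf_cont {Q : ℝ} (hQ : 3 ≤ Q) : ContinuousOn (psf Q) (Ioo 0 1) :=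
  fun x hx => ((hasDerivAt_psf hQ hx).differentiableAt.continuousAt).continuousWithinAt

lemma psf_at_inv {Q : ℝ} (hQ : 3 ≤ Q) : psf Q (1/Q) = 0 := by
  have hQ0 : (0:ℝ) < Q := by linarith
  have hQ1 : (0:ℝ) < Q - 1 := by linarith
  unfold psf Lf
  have h1 : Q * (1/Q) - 1 = 0 := by field_simp; ring
  have h2 : (Q-1) * (1/Q) / (1 - 1/Q) = 1 := by
    rw [div_eq_one_iff_eq (by intro h; rw [sub_eq_zero] at h; field_simp at h; linarith)]
    field_simp
  rw [h1, h2, Real.log_one]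
  ring

lemma psf_strictAntiOn {Q : ℝ} (hQ : 3 ≤ Q) :
    StrictAntiOn (psf Q) (Icc (1/Q) (1/2)) := by
  have hQ0 : (0:ℝ) < Q := by linarith
  have hsub : Icc (1/Q) (1/2) ⊆ Ioo (0:ℝ) 1 := by
    intro y hy
    obtain ⟨h1, h2⟩ := hy
    constructor
    · have : (0:ℝ) < 1/Q := by positivity
      linarith
    · linarith
  apply strictAntiOn_of_deriv_neg (convex_Icc _ _) ((psf_cont hQ).mono hsub)
  intro y hy
  rw [interior_Icc] at hy
  obtain ⟨h1, h2⟩ := hy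
  have hy0 : 0 < y := lt_trans (by positivity) h1
  have hy1 : y < 1 := by linarith
  rw [(hasDerivAt_psf hQ ⟨hy0, hy1⟩).deriv]
  have hyQ : 1 < Q * y := by
    have := (div_lt_iff₀ hQ0).mp h1
    linarith
  have hnum : 2*Q*y^2-(Q+2)*y+1 < 0 := by nlinarith
  have h1y : (0:ℝ) < 1 - y := by linarith
  have hden : 0 < y^2*(1-y)^2 := by positivity
  exact div_neg_of_neg_of_pos hnum hden

lemma psf_strictMonoOn {Q : ℝ} (hQ : 3 ≤ Q) :
    StrictMonoOn (psf Q) (Ico (1/2:ℝ) 1) := by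
  have hsub : Ico (1/2:ℝ) 1 ⊆ Ioo (0:ℝ) 1 := fun y hy => ⟨by linarith [hy.1], hy.2⟩
  apply strictMonoOn_of_deriv_pos (convex_Ico _ _) ((psf_cont hQ).mono hsub)
  intro y hy
  rw [interior_Ico] at hy
  obtain ⟨h1, h2⟩ := hy
  have hy0 : (0:ℝ) < y := by linarith
  rw [(hasDerivAt_psf hQ ⟨hy0, h2⟩).deriv]
  have hnum : 0 < 2*Q*y^2-(Q+2)*y+1 := by
    nlinarith [mul_pos (show (0:ℝ) < y - 1/2 by linarith) (show (0:ℝ) < Q*y - 1 by nlinarith)]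
  have h1y : (0:ℝ) < 1 - y := by linarith
  have hden : 0 < y^2*(1-y)^2 := by positivity
  exact div_pos hnum hden

lemma psf_neg {Q x : ℝ} (hQ : 3 ≤ Q) (hx : x ∈ Ioc (1/Q) (1/2:ℝ)) : psf Q x < 0 := by
  have hQinv : (1/Q : ℝ) < 1/2 := by
    rw [div_lt_div_iff₀ (by linarith) (by norm_num)]
    linarith
  have := psf_strictAntiOn hQ ⟨le_refl _, le_of_lt hQinv⟩ ⟨le_of_lt hx.1, hx.2⟩ hx.1
  rw [psf_at_inv hQ] at this
  exact this

lemma log_le_two_sqrt {r : ℝ} (hr : 0 < r) : Real.log r ≤ 2*Real.sqrt r - 2 := by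
  have h := Real.log_le_sub_one_of_pos (Real.sqrt_pos.mpr hr)
  have h2 : Real.log (Real.sqrt r) = Real.log r / 2 := Real.log_sqrt hr.le
  linarith

lemma psf_pos_x1 {Q : ℝ} (hQ : 3 ≤ Q) : 0 < psf Q (1 - 1/(4*Q^3)) := by
  have hQ0 : (0:ℝ) < Q := by linarith
  have hQ1 : (0:ℝ) < Q - 1 := by linarith
  set ε : ℝ := 1/(4*Q^3) with hε
  have hε0 : 0 < ε := by positivity
  have hQ2 : (9:ℝ) ≤ Q^2 := by nlinarith
  have hQ3 : (27:ℝ) ≤ Q^3 := by nlinarith [mul_nonneg (sub_nonneg.mpr hQ) (sq_nonneg Q)]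
  have hε1 : ε ≤ 1/108 := by
    rw [hε, div_le_div_iff₀ (by positivity) (by norm_num)]
    nlinarith
  set x : ℝ := 1 - ε with hxdef
  have hx1 : x < 1 := by simp [hxdef]; positivity
  have hx12 : (1/2:ℝ) < x := by rw [hxdef]; linarith
  have hx0 : 0 < x := by linarith
  have h1x : 1 - x = ε := by rw [hxdef]; ring
  have hQx : 1 ≤ Q*x - 1 := by
    have : Q * ε ≤ 1/36 := by
      rw [hε, mul_one_div, div_le_div_iff₀ (by positivity) (by norm_num)]
      nlinarith [mul_nonneg hQ0.le (show (0:ℝ) ≤ Q^2 - 9 by nlinarith)]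
    nlinarith
  -- bound on first term
  have hterm1 : 1/ε ≤ (Q*x - 1)/(x*(1-x)) := by
    rw [h1x, div_le_div_iff₀ hε0 (by positivity)]
    nlinarith
  -- bound on log term
  have hargle : (Q-1)*x/(1-x) ≤ (Q-1)*(4*Q^3) := by
    rw [h1x, hε]
    rw [div_le_iff₀ (by positivity)]
    have : (Q-1) * (4*Q^3) * (1/(4*Q^3)) = Q - 1 := by field_simp
    rw [this]
    nlinarith
  have hargpos : 0 < (Q-1)*x/(1-x) := by rw [h1x]; positivity
  have hsqrt : Real.sqrt ((Q-1)*(4*Q^3)) ≤ 2*Q^2 := by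
    have h4 : (Q-1)*(4*Q^3) ≤ (2*Q^2)^2 := by nlinarith
    calc Real.sqrt ((Q-1)*(4*Q^3)) ≤ Real.sqrt ((2*Q^2)^2) := Real.sqrt_le_sqrt h4
      _ = 2*Q^2 := Real.sqrt_sq (by positivity)
  have hlog : Real.log ((Q-1)*x/(1-x)) ≤ 4*Q^2 - 2 := by
    calc Real.log ((Q-1)*x/(1-x)) ≤ Real.log ((Q-1)*(4*Q^3)) :=
          Real.log_le_log hargpos hargle
      _ ≤ 2*Real.sqrt ((Q-1)*(4*Q^3)) - 2 := log_le_two_sqrt (by positivity)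
      _ ≤ 4*Q^2 - 2 := by linarith
  have h1e : (1/ε : ℝ) = 4*Q^3 := by rw [hε]; field_simp
  unfold psf Lf
  have : Q * Real.log ((Q-1)*x/(1-x)) ≤ 4*Q^3 - 2*Q := by nlinarith
  have hfin : (4:ℝ)*Q^3 ≤ (Q*x-1)/(x*(1-x)) := by rw [← h1e]; exact hterm1
  linarith

lemma half_lt_x1 {Q : ℝ} (hQ : 3 ≤ Q) : (1/2:ℝ) < 1 - 1/(4*Q^3) := by
  have h : (1:ℝ)/(4*Q^3) ≤ 1/108 := by
    rw [div_le_div_iff₀ (by positivity) (by norm_num)]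
    nlinarith [mul_nonneg (sub_nonneg.mpr hQ) (sq_nonneg Q), sq_nonneg (Q-3)]
  linarith

lemma inv_lt_half {Q : ℝ} (hQ : 3 ≤ Q) : (1/Q:ℝ) < 1/2 := by
  rw [div_lt_div_iff₀ (by linarith) (by norm_num)]
  linarith

lemma exists_sstar {Q : ℝ} (hQ : 3 ≤ Q) : ∃ s ∈ Ioo (1/2:ℝ) 1, psf Q s = 0 := by
  set x1 : ℝ := 1 - 1/(4*Q^3) with hx1def
  have hx1 : (1/2:ℝ) < x1 := half_lt_x1 hQ
  have hx11 : x1 < 1 := by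
    have : (0:ℝ) < 1/(4*Q^3) := by positivity
    rw [hx1def]; linarith
  have hsub : Icc (1/2:ℝ) x1 ⊆ Ioo (0:ℝ) 1 :=
    fun y hy => ⟨by linarith [hy.1], by linarith [hy.2]⟩
  have hiv := intermediate_value_Ioo (le_of_lt hx1) ((psf_cont hQ).mono hsub)
  have hneg : psf Q (1/2) < 0 := psf_neg hQ ⟨inv_lt_half hQ, le_refl _⟩
  have hpos : 0 < psf Q x1 := psf_pos_x1 hQ
  have h0 : (0:ℝ) ∈ Ioo (psf Q (1/2)) (psf Q x1) := ⟨hneg, hpos⟩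
  obtain ⟨s, hs, hψ⟩ := hiv h0
  exact ⟨s, ⟨hs.1, lt_trans hs.2 hx11⟩, hψ⟩

lemma psf_neg_of_lt {Q s x : ℝ} (hQ : 3 ≤ Q) (hs : s ∈ Ioo (1/2:ℝ) 1)
    (hψ : psf Q s = 0) (hx : x ∈ Ioo (1/Q) 1) (hxs : x < s) : psf Q x < 0 := by
  rcases le_or_gt x (1/2) with h | h
  · exact psf_neg hQ ⟨hx.1, h⟩
  · have := psf_strictMonoOn hQ ⟨le_of_lt h, by linarith [hs.2]⟩ ⟨le_of_lt hs.1, hs.2⟩ hxs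
    rw [hψ] at this
    exact this

lemma psf_pos_of_gt {Q s x : ℝ} (hQ : 3 ≤ Q) (hs : s ∈ Ioo (1/2:ℝ) 1)
    (hψ : psf Q s = 0) (hx : x < 1) (hxs : s < x) : 0 < psf Q x := by
  have := psf_strictMonoOn hQ ⟨le_of_lt hs.1, hs.2⟩ ⟨by linarith [hs.1], hx⟩ hxs
  rw [hψ] at this
  exact this

lemma phf_cont {Q : ℝ} (hQ : 3 ≤ Q) : ContinuousOn (phf Q) (Ioo (1/Q) 1) :=
  fun x hx => ((hasDerivAt_phf hQ hx).differentiableAt.continuousAt).continuousWithinAt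

lemma phf_min {Q s : ℝ} (hQ : 3 ≤ Q) (hs : s ∈ Ioo (1/2:ℝ) 1) (hψ : psf Q s = 0) :
    ∀ x ∈ Ioo (1/Q) 1, x ≠ s → phf Q s < phf Q x := by
  have hQ0 : (0:ℝ) < Q := by linarith
  have hQs : (1/Q:ℝ) < s := lt_trans (inv_lt_half hQ) hs.1
  have hanti : StrictAntiOn (phf Q) (Ioc (1/Q) s) := by
    apply strictAntiOn_of_deriv_neg (convex_Ioc _ _)
    · exact (phf_cont hQ).mono (fun y hy => ⟨hy.1, lt_of_le_of_lt hy.2 hs.2⟩)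
    · intro y hy
      rw [interior_Ioc] at hy
      have hy' : y ∈ Ioo (1/Q) 1 := ⟨hy.1, lt_trans hy.2 hs.2⟩
      rw [(hasDerivAt_phf hQ hy').deriv]
      have hψy : psf Q y < 0 := psf_neg_of_lt hQ hs hψ hy' hy.2
      have hQy : 0 < Q*y - 1 := by
        have := (div_lt_iff₀ hQ0).mp hy.1
        linarith
      have : 0 < 2*(Q*y-1)^2 := by positivity
      apply div_neg_of_neg_of_pos _ this
      nlinarith
  have hmono : StrictMonoOn (phf Q) (Ico s 1) := by
    apply strictMonoOn_of_deriv_pos (convex_Ico _ _)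
    · exact (phf_cont hQ).mono (fun y hy => ⟨lt_of_lt_of_le hQs hy.1, hy.2⟩)
    · intro y hy
      rw [interior_Ico] at hy
      have hy' : y ∈ Ioo (1/Q) 1 := ⟨lt_trans hQs hy.1, hy.2⟩
      rw [(hasDerivAt_phf hQ hy').deriv]
      have hψy : 0 < psf Q y := psf_pos_of_gt hQ hs hψ hy.2 hy.1
      have hQy : 0 < Q*y - 1 := by
        have := (div_lt_iff₀ hQ0).mp hy'.1
        linarith
      apply div_pos _ (by positivity)
      nlinarith
  intro x hx hxs
  rcases lt_or_gt_of_ne hxs with h | h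
  · exact hanti ⟨hx.1, le_of_lt h⟩ ⟨hQs, le_refl _⟩ h
  · exact hmono ⟨le_refl _, hs.2⟩ ⟨le_of_lt h, hx.2⟩ h

lemma key_identities {Q s : ℝ} (hQ : 3 ≤ Q) (hs : s ∈ Ioo (1/2:ℝ) 1) (hψ : psf Q s = 0) :
    Lf Q s = (Q*s-1)/(Q*s*(1-s)) ∧ phf Q s = (Q-1)/(2*Q*s*(1-s)) := by
  have hQ0 : (0:ℝ) < Q := by linarith
  have hs0 : 0 < s := by linarith [hs.1]
  have h1s : 0 < 1 - s := by linarith [hs.2]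
  have hQs : 0 < Q*s - 1 := by nlinarith [hs.1]
  have hL : Lf Q s = (Q*s-1)/(Q*s*(1-s)) := by
    unfold psf at hψ
    rw [sub_eq_zero] at hψ
    field_simp at hψ ⊢
    nlinarith [hψ]
  refine ⟨hL, ?_⟩
  unfold phf
  rw [hL]
  field_simp

lemma phf_pos_at {Q s : ℝ} (hQ : 3 ≤ Q) (hs : s ∈ Ioo (1/2:ℝ) 1) (hψ : psf Q s = 0) :
    0 < phf Q s := by
  rw [(key_identities hQ hs hψ).2]
  have hs0 : 0 < s := by linarith [hs.1]
  have h1s : 0 < 1 - s := by linarith [hs.2]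
  have : (0:ℝ) < Q - 1 := by linarith
  positivity

lemma phf_surj {Q s : ℝ} (hQ : 3 ≤ Q) (hs : s ∈ Ioo (1/2:ℝ) 1) (hψ : psf Q s = 0) :
    ∀ β, phf Q s ≤ β → ∃ x ∈ Ioo (1/Q) 1, phf Q x = β := by
  intro β hβ
  have hβ0 : 0 ≤ β := le_trans (phf_pos_at hQ hs hψ).le hβ
  have hQ0 : (0:ℝ) < Q := by linarith
  set δ : ℝ := Real.exp (-(4*β+1)) with hδdef
  have hδ0 : 0 < δ := Real.exp_pos _
  have hδhalf : δ < 1/2 := by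
    have h1 : δ ≤ Real.exp (-1) := Real.exp_le_exp.mpr (by linarith)
    have h2 : Real.exp (-1) < 1/2 := by
      rw [Real.exp_neg]
      rw [inv_lt_comm₀ (Real.exp_pos 1) (by norm_num)]
      calc (1/2:ℝ)⁻¹ = 2 := by norm_num
        _ < Real.exp 1 := by linarith [Real.exp_one_gt_d9]
    linarith
  set y : ℝ := 1 - δ with hydef
  have hy2 : (1/2:ℝ) < y := by rw [hydef]; linarith
  have hy1 : y < 1 := by rw [hydef]; linarith
  have hQy : 0 < Q*y - 1 := by nlinarith
  have hLy : 4*β + 1 ≤ Lf Q y := by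
    have h1y : 1 - y = δ := by rw [hydef]; ring
    have h2y : (1:ℝ) ≤ (Q-1)*y := by
      nlinarith [mul_nonneg (show (0:ℝ) ≤ Q-3 by linarith) (show (0:ℝ) ≤ y by linarith)]
    have harg : 1/δ ≤ (Q-1)*y/(1-y) := by
      rw [h1y, div_le_div_iff₀ hδ0 hδ0]
      nlinarith [mul_le_mul_of_nonneg_right h2y hδ0.le]
    have hlog := Real.log_le_log (by positivity) harg
    have : Real.log (1/δ) = 4*β+1 := by
      rw [one_div, Real.log_inv, hδdef, Real.log_exp]
      ring
    unfold Lf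
    linarith
  have hφy : β ≤ phf Q y := by
    have hL0 : 0 ≤ Lf Q y := by linarith
    have hb : 2*(Q*y-1) ≤ 2*(Q-1) := by nlinarith
    have h1 : (Q-1)*Lf Q y/(2*(Q-1)) ≤ (Q-1)*Lf Q y/(2*(Q*y-1)) :=
      div_le_div_of_nonneg_left (by nlinarith) (by linarith) hb
    have h2 : (Q-1)*Lf Q y/(2*(Q-1)) = Lf Q y/2 := by
      rw [show (2*(Q-1)) = (Q-1)*2 by ring, mul_div_mul_left _ _ (show Q-1 ≠ 0 by linarith)]
    unfold phf
    rw [h2] at h1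
    linarith
  -- IVT on uIcc s y
  have hsub : uIcc s y ⊆ Ioo (1/Q) 1 := by
    intro z hz
    rw [mem_uIcc] at hz
    have h12 : (1/Q:ℝ) < 1/2 := inv_lt_half hQ
    rcases hz with ⟨h1, h2⟩ | ⟨h1, h2⟩
    · exact ⟨by linarith [hs.1], by linarith⟩
    · exact ⟨by linarith, by linarith [hs.2]⟩
  have hiv := intermediate_value_uIcc ((phf_cont hQ).mono hsub)
  have hmem : β ∈ uIcc (phf Q s) (phf Q y) := by
    rw [mem_uIcc]
    left
    exact ⟨hβ, hφy⟩
  obtain ⟨x, hx, hφx⟩ := hiv hmem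
  exact ⟨x, hsub hx, hφx⟩

lemma betaS_eq {q : ℕ} (hq : 3 ≤ q) {s : ℝ} (hs : s ∈ Ioo (1/2:ℝ) 1)
    (hψ : psf q s = 0) : betaS q = phf q s := by
  have hQ : (3:ℝ) ≤ (q:ℝ) := by exact_mod_cast hq
  have hb0 : 0 < phf (q:ℝ) s := phf_pos_at hQ hs hψ
  have hset : {β : ℝ | 0 ≤ β ∧ ∀ x ∈ Set.Ioo (1 / (q : ℝ)) 1, Dfun q β x ≠ 0}
      = Ico 0 (phf (q:ℝ) s) := by
    ext β
    simp only [mem_setOf_eq, mem_Ico]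
    constructor
    · rintro ⟨hβ0, h⟩
      refine ⟨hβ0, ?_⟩
      by_contra hle
      push_neg at hle
      obtain ⟨x, hx, hφ⟩ := phf_surj hQ hs hψ β hle
      exact h x (by simpa [one_div] using hx) ((D_zero_iff hq (by simpa [one_div] using hx)).mpr hφ.symm)
    · rintro ⟨hβ0, hβb⟩
      refine ⟨hβ0, fun x hx hD => ?_⟩
      have hx' : x ∈ Ioo (1/(q:ℝ)) 1 := by simpa [one_div] using hx
      have hβφ := (D_zero_iff hq hx').mp hD
      rcases eq_or_ne x s with rfl | hne
      · rw [← hβφ] at hβb; linarith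
      · have := phf_min hQ hs hψ x hx' hne
        rw [← hβφ] at this
        linarith
  unfold betaS
  rw [hset, csSup_Ico hb0]

lemma Ef_at {Q s : ℝ} (hQ : 3 ≤ Q) (hs : s ∈ Ioo (1/2:ℝ) 1) (hψ : psf Q s = 0) :
    Ef Q (phf Q s) s = (1-s)/s := by
  have hQ1 : (0:ℝ) < Q - 1 := by linarith
  have hs0 : 0 < s := by linarith [hs.1]
  have h1s : 0 < 1 - s := by linarith [hs.2]
  have hQs : 0 < Q*s - 1 := by nlinarith [hs.1]
  have hexp : 2*(phf Q s)*(1-Q*s)/(Q-1) = - Lf Q s := by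
    unfold phf
    field_simp
    ring
  unfold Ef
  rw [hexp, Real.exp_neg]
  unfold Lf
  rw [Real.exp_log (by positivity)]
  field_simp

lemma K_at {Q s : ℝ} (hQ : 3 ≤ Q) (hs : s ∈ Ioo (1/2:ℝ) 1) (hψ : psf Q s = 0) :
    2*(phf Q s)*Q/(Q-1) = 1/(s*(1-s)) := by
  have hQ0 : (0:ℝ) < Q := by linarith
  have hQ1 : (0:ℝ) < Q - 1 := by linarith
  have hs0 : 0 < s := by linarith [hs.1]
  have h1s : 0 < 1 - s := by linarith [hs.2]
  rw [(key_identities hQ hs hψ).2]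
  field_simp

lemma Dp_zero {Q s : ℝ} (hQ : 3 ≤ Q) (hs : s ∈ Ioo (1/2:ℝ) 1) (hψ : psf Q s = 0) :
    Dp Q (phf Q s) s = 0 := by
  have hs0 : 0 < s := by linarith [hs.1]
  have h1s : 0 < 1 - s := by linarith [hs.2]
  unfold Dp
  rw [Ef_at hQ hs hψ, K_at hQ hs hψ]
  have h1E : 1 + (1-s)/s = 1/s := by field_simp; ring
  rw [h1E]
  field_simp
  ring

lemma Dpp_neg {Q s : ℝ} (hQ : 3 ≤ Q) (hs : s ∈ Ioo (1/2:ℝ) 1) (hψ : psf Q s = 0) :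
    Dpp Q (phf Q s) s < 0 := by
  have hQ1 : (0:ℝ) < Q - 1 := by linarith
  have hs0 : 0 < s := by linarith [hs.1]
  have h1s : 0 < 1 - s := by linarith [hs.2]
  have hE := Ef_at hQ hs hψ
  have hK := K_at hQ hs hψ
  unfold Dpp
  rw [hE]
  have hKpos : 0 < 2*(phf Q s)*Q/(Q-1) := by
    rw [hK]; positivity
  have hE0 : (0:ℝ) < (1-s)/s := by positivity
  have hE1 : (1-s)/s - 1 < 0 := by
    rw [div_sub_one (by positivity)]
    apply div_neg_of_neg_of_pos _ hs0
    linarith [hs.1]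
  have hden : (0:ℝ) < (1 + (1-s)/s)^3 := by positivity
  apply div_neg_of_neg_of_pos _ hden
  apply mul_neg_of_pos_of_neg _ hE1
  positivity


/-- (Proposition 5.1, part 1, plus Eq. (5.3)): at `β = β_s(q)` the drift
function `D_{β_s}` has a unique zero `s*` in `(1/q,1]`; at this zero the first
derivative vanishes and the second derivative is strictly negative. -/
theorem Dfun_betaS_unique_zero (q : ℕ) (hq : 3 ≤ q) :
    ∃ s ∈ Set.Ioc (1 / (q : ℝ)) 1,
      Dfun q (betaS q) s = 0 ∧
      (∀ s' ∈ Set.Ioc (1 / (q : ℝ)) 1, Dfun q (betaS q) s' = 0 → s' = s) ∧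
      deriv (fun x => Dfun q (betaS q) x) s = 0 ∧
      deriv (deriv (fun x => Dfun q (betaS q) x)) s < 0 := by
  have hQ : (3:ℝ) ≤ (q:ℝ) := by exact_mod_cast hq
  have h12 : (1/(q:ℝ)) < 1/2 := inv_lt_half hQ
  obtain ⟨s, hs, hψ⟩ := exists_sstar hQ
  have hsIoo : s ∈ Ioo (1/(q:ℝ)) 1 := ⟨lt_trans h12 hs.1, hs.2⟩
  have hbs : betaS q = phf (q:ℝ) s := betaS_eq hq hs hψ
  refine ⟨s, ⟨hsIoo.1, hsIoo.2.le⟩, ?_, ?_, ?_, ?_⟩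
  · rw [hbs]
    exact (D_zero_iff hq hsIoo).mpr rfl
  · rintro s' ⟨hs'1, hs'2⟩ hD
    rcases eq_or_lt_of_le hs'2 with rfl | hs'lt
    · -- s' = 1 : impossible since Dfun q β 1 < 0
      exfalso
      have hE := Ef_pos (Q := (q:ℝ)) (β := betaS q) (x := 1) hQ
      have hinv : (1 + Ef (q:ℝ) (betaS q) 1)⁻¹ < 1 := by
        rw [inv_lt_one_iff₀]
        right
        linarith
      have hDval : Dfun q (betaS q) 1 = -1 + (1 + Ef (q:ℝ) (betaS q) 1)⁻¹ := by
        unfold Dfun Ef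
        ring_nf
      rw [hDval] at hD
      linarith
    · have hs'Ioo : s' ∈ Ioo (1/(q:ℝ)) 1 := ⟨hs'1, hs'lt⟩
      rw [hbs] at hD
      have hφ := (D_zero_iff hq hs'Ioo).mp hD
      by_contra hne
      have := phf_min hQ hs hψ s' hs'Ioo hne
      rw [← hφ] at this
      linarith
  · rw [(hasDerivAt_D hq (betaS q) s).deriv, hbs]
    exact Dp_zero hQ hs hψ
  · have hder : deriv (fun x => Dfun q (betaS q) x) = fun x => Dp (q:ℝ) (betaS q) x :=
      funext fun x => (hasDerivAt_D hq (betaS q) x).deriv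
    rw [hder, (hasDerivAt_Dp hq (betaS q) s).deriv, hbs]
    exact Dpp_neg hQ hs hψ
end

section
/- Let q ≥ 3 be an integer, let β_s = β_s(q), and let s* be the unique zero of D_{β_s} in (1/q, 1]. Then: (i) (∂/∂β) D_β(s*)|_{β = β_s} > 0; and (ii) for every ρ > 0 there exist δ > 0 and c > 0 such that D_β(s) ≤ −c for all β with |β − β_s| < δ and all s ∈ (1/q + ρ, 1] with |s − s*| ≥ ρ. -/
section Aux

variable {q : ℕ}

lemma qR_ge (hq : 3 ≤ q) : (3:ℝ) ≤ (q:ℝ) := by exact_mod_cast hq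

lemma den_pos (hq : 3 ≤ q) (t : ℝ) :
    0 < 1 + ((q : ℝ) - 1) * Real.exp t := by
  have h3 := qR_ge hq
  have := Real.exp_pos t
  nlinarith

lemma Dfun_cont (hq : 3 ≤ q) :
    Continuous (fun p : ℝ × ℝ => Dfun q p.1 p.2) := by
  unfold Dfun
  refine (continuous_snd.neg).add (Continuous.inv₀ ?_ ?_)
  · fun_prop
  · intro p
    exact ne_of_gt (den_pos hq _)

lemma Dfun_cont_x (hq : 3 ≤ q) (β : ℝ) :
    Continuous (fun s : ℝ => Dfun q β s) :=
  (Dfun_cont hq).comp (continuous_const.prodMk continuous_id)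

lemma Dfun_cont_beta (hq : 3 ≤ q) (s : ℝ) :
    Continuous (fun β : ℝ => Dfun q β s) :=
  (Dfun_cont hq).comp (continuous_id.prodMk continuous_const)

lemma Dfun_at_one (hq : 3 ≤ q) (β : ℝ) : Dfun q β 1 < 0 := by
  unfold Dfun
  have h3 := qR_ge hq
  have hE := Real.exp_pos (2 * β * (1 - (q:ℝ) * 1) / ((q:ℝ) - 1))
  have h1 : 1 < 1 + ((q:ℝ) - 1) * Real.exp (2 * β * (1 - (q:ℝ) * 1) / ((q:ℝ) - 1)) := by
    nlinarith
  have := inv_lt_one_of_one_lt₀ h1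
  linarith

/-- near `1`, `D_β` is negative somewhere above any `x < 1`. -/
lemma neg_near_one (hq : 3 ≤ q) (β x : ℝ) (hx : x < 1) :
    ∃ y : ℝ, x < y ∧ y < 1 ∧ Dfun q β y < 0 := by
  have hc := Dfun_cont_x hq β
  have hopen : IsOpen ((fun s : ℝ => Dfun q β s) ⁻¹' Set.Iio 0) :=
    (isOpen_Iio).preimage hc
  have h1 : (1:ℝ) ∈ (fun s : ℝ => Dfun q β s) ⁻¹' Set.Iio 0 := Dfun_at_one hq β
  obtain ⟨ε, hε, hball⟩ := Metric.isOpen_iff.mp hopen 1 h1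
  set m := min ε (1 - x) with hm
  have hm0 : 0 < m := lt_min hε (by linarith)
  have hmε : m ≤ ε := min_le_left _ _
  have hmx : m ≤ 1 - x := min_le_right _ _
  refine ⟨1 - m / 2, by linarith, by linarith, ?_⟩
  have : (1 - m / 2) ∈ Metric.ball (1:ℝ) ε := by
    rw [Metric.mem_ball, Real.dist_eq]
    have h2 : (1 - m / 2) - 1 = -(m / 2) := by ring
    rw [h2, abs_neg, abs_of_pos (by linarith)]
    linarith
  exact hball this

lemma zero_mem_S (hq : 3 ≤ q) :
    (0:ℝ) ∈ {β : ℝ | 0 ≤ β ∧ ∀ x ∈ Set.Ioo (1 / (q : ℝ)) 1, Dfun q β x ≠ 0} := by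
  have h3 := qR_ge hq
  refine ⟨le_refl 0, fun x hx => ?_⟩
  have hD : Dfun q 0 x = -x + (q:ℝ)⁻¹ := by
    unfold Dfun
    rw [show 2 * (0:ℝ) * (1 - (q:ℝ) * x) / ((q:ℝ) - 1) = 0 by ring, Real.exp_zero,
      show 1 + ((q:ℝ) - 1) * 1 = (q:ℝ) by ring]
  rw [hD]
  have hx1 : 1 / (q:ℝ) < x := hx.1
  rw [one_div] at hx1
  intro h
  linarith [h]

lemma S_bddAbove (hq : 3 ≤ q) :
    BddAbove {β : ℝ | 0 ≤ β ∧ ∀ x ∈ Set.Ioo (1 / (q : ℝ)) 1, Dfun q β x ≠ 0} := by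
  have h3 := qR_ge hq
  have hq1 : (0:ℝ) < (q:ℝ) - 1 := by linarith
  have hq2 : (0:ℝ) < (q:ℝ) - 2 := by linarith
  refine ⟨((q:ℝ) - 1) * Real.log ((q:ℝ) - 1) / ((q:ℝ) - 2), ?_⟩
  rintro β ⟨-, hβ⟩
  by_contra hcon
  push_neg at hcon
  -- D_β(1/2) > 0
  have ht : 2 * β * (1 - (q:ℝ) * (1/2)) / ((q:ℝ) - 1)
      = -(β * ((q:ℝ) - 2) / ((q:ℝ) - 1)) := by ring
  have hlog : Real.log ((q:ℝ) - 1) < β * ((q:ℝ) - 2) / ((q:ℝ) - 1) := by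
    rw [lt_div_iff₀ hq1]
    have hB : ((q:ℝ) - 1) * Real.log ((q:ℝ) - 1) / ((q:ℝ) - 2) * ((q:ℝ) - 2)
        = Real.log ((q:ℝ) - 1) * ((q:ℝ) - 1) := by
      field_simp
    nlinarith [hcon]
  have ht' : 2 * β * (1 - (q:ℝ) * (1/2)) / ((q:ℝ) - 1) < -(Real.log ((q:ℝ) - 1)) := by
    rw [ht]; linarith
  have hexp : Real.exp (2 * β * (1 - (q:ℝ) * (1/2)) / ((q:ℝ) - 1)) < ((q:ℝ) - 1)⁻¹ := by
    have hiq : ((q:ℝ) - 1)⁻¹ = Real.exp (-(Real.log ((q:ℝ) - 1))) := by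
      rw [Real.exp_neg, Real.exp_log hq1]
    rw [hiq]
    exact Real.exp_lt_exp.mpr ht'
  have hE : ((q:ℝ) - 1) * Real.exp (2 * β * (1 - (q:ℝ) * (1/2)) / ((q:ℝ) - 1)) < 1 := by
    have := mul_lt_mul_of_pos_left hexp hq1
    rwa [mul_inv_cancel₀ (ne_of_gt hq1)] at this
  have hd0 := den_pos hq (2 * β * (1 - (q:ℝ) * (1/2)) / ((q:ℝ) - 1))
  have hd2 : 1 + ((q:ℝ) - 1) * Real.exp (2 * β * (1 - (q:ℝ) * (1/2)) / ((q:ℝ) - 1)) < 2 := by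
    linarith
  have hinv : (1:ℝ)/2 <
      (1 + ((q:ℝ) - 1) * Real.exp (2 * β * (1 - (q:ℝ) * (1/2)) / ((q:ℝ) - 1)))⁻¹ := by
    have := one_div_lt_one_div_of_lt hd0 hd2
    rw [one_div
      (1 + ((q:ℝ) - 1) * Real.exp (2 * β * (1 - (q:ℝ) * (1/2)) / ((q:ℝ) - 1)))] at this
    linarith
  have hhalf : 0 < Dfun q β (1/2) := by
    unfold Dfun
    linarith
  -- a zero in (1/q, 1) by IVT
  obtain ⟨y, hy1, hy2, hy3⟩ := neg_near_one hq β (1/2) (by norm_num)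
  have hivt := intermediate_value_Icc' (le_of_lt hy1) ((Dfun_cont_x hq β).continuousOn)
  have h0mem : (0:ℝ) ∈ Set.Icc (Dfun q β y) (Dfun q β (1/2)) := ⟨le_of_lt hy3, le_of_lt hhalf⟩
  obtain ⟨z, hz, hz0⟩ := hivt h0mem
  have hzq : 1 / (q:ℝ) < z := by
    have : 1 / (q:ℝ) ≤ 1/3 := by
      rw [div_le_div_iff₀ (by linarith) (by norm_num)]
      linarith
    have hz1 := hz.1
    linarith
  exact hβ z ⟨hzq, lt_of_le_of_lt hz.2 hy2⟩ hz0

/-- `D_{β_s} ≤ 0` on `(1/q, 1]`. -/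
lemma Dfun_betaS_nonpos (hq : 3 ≤ q) (x : ℝ) (hx : x ∈ Set.Ioc (1 / (q:ℝ)) 1) :
    Dfun q (betaS q) x ≤ 0 := by
  rcases hx.2.eq_or_lt with h1 | h1
  · rw [h1]; exact le_of_lt (Dfun_at_one hq _)
  by_contra hpos
  push_neg at hpos
  have hopen : IsOpen ((fun β : ℝ => Dfun q β x) ⁻¹' Set.Ioi 0) :=
    isOpen_Ioi.preimage (Dfun_cont_beta hq x)
  have hmem : betaS q ∈ (fun β : ℝ => Dfun q β x) ⁻¹' Set.Ioi 0 := hpos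
  obtain ⟨ε, hε, hball⟩ := Metric.isOpen_iff.mp hopen _ hmem
  have hne : Set.Nonempty {β : ℝ | 0 ≤ β ∧ ∀ x ∈ Set.Ioo (1 / (q : ℝ)) 1, Dfun q β x ≠ 0} :=
    ⟨0, zero_mem_S hq⟩
  obtain ⟨b, hbS, hb⟩ := exists_lt_of_lt_csSup hne
    (show betaS q - ε < betaS q by linarith)
  have hble : b ≤ betaS q := le_csSup (S_bddAbove hq) hbS
  have hbball : b ∈ Metric.ball (betaS q) ε := by
    rw [Metric.mem_ball, Real.dist_eq, abs_of_nonpos (by linarith)]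
    linarith
  have hbx : 0 < Dfun q b x := hball hbball
  obtain ⟨y, hy1, hy2, hy3⟩ := neg_near_one hq b x h1
  have hivt := intermediate_value_Icc' (le_of_lt hy1) ((Dfun_cont_x hq b).continuousOn)
  have h0mem : (0:ℝ) ∈ Set.Icc (Dfun q b y) (Dfun q b x) := ⟨le_of_lt hy3, le_of_lt hbx⟩
  obtain ⟨z, hz, hz0⟩ := hivt h0mem
  exact hbS.2 z ⟨lt_of_lt_of_le hx.1 hz.1, lt_of_le_of_lt hz.2 hy2⟩ hz0

end Aux

/-- (Proposition 5.1, parts 2 and 3): let `s*` be the unique zero of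
`D_{β_s}` in `(1/q,1]`. Then (i) `(∂/∂β) D_β(s*)` at `β = β_s` is strictly
positive, and (ii) for every `ρ > 0` there are `δ, c > 0` such that
`D_β(s) ≤ −c` whenever `|β − β_s| < δ`, `s ∈ (1/q + ρ, 1]` and
`|s − s*| ≥ ρ`. -/
theorem Dfun_near_betaS (q : ℕ) (hq : 3 ≤ q) (sStar : ℝ)
    (hmem : sStar ∈ Set.Ioc (1 / (q : ℝ)) 1)
    (hzero : Dfun q (betaS q) sStar = 0)
    (huniq : ∀ s ∈ Set.Ioc (1 / (q : ℝ)) 1, Dfun q (betaS q) s = 0 → s = sStar) :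
    0 < deriv (fun β => Dfun q β sStar) (betaS q) ∧
    ∀ ρ : ℝ, 0 < ρ → ∃ δ c : ℝ, 0 < δ ∧ 0 < c ∧
      ∀ β : ℝ, |β - betaS q| < δ →
        ∀ s ∈ Set.Ioc (1 / (q : ℝ) + ρ) 1, ρ ≤ |s - sStar| → Dfun q β s ≤ -c := by
  have h3 := qR_ge hq
  have hq1 : (0:ℝ) < (q:ℝ) - 1 := by linarith
  have hq0 : (0:ℝ) < (q:ℝ) := by linarith
  constructor
  · -- part (i)
    set k : ℝ := 2 * (1 - (q:ℝ) * sStar) / ((q:ℝ) - 1) with hk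
    have hkneg : k < 0 := by
      have h1 : 1 / (q:ℝ) < sStar := hmem.1
      rw [div_lt_iff₀ hq0] at h1
      apply div_neg_of_neg_of_pos _ hq1
      nlinarith
    have hfun : (fun β => Dfun q β sStar)
        = fun β => -sStar + (1 + ((q:ℝ) - 1) * Real.exp (k * β))⁻¹ := by
      funext β
      unfold Dfun
      rw [show k * β = 2 * β * (1 - (q:ℝ) * sStar) / ((q:ℝ) - 1) by rw [hk]; ring]
    rw [hfun]
    have h1 : HasDerivAt (fun β : ℝ => k * β) k (betaS q) := by
      simpa using (hasDerivAt_id (betaS q)).const_mul k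
    have h2 : HasDerivAt (fun β : ℝ => Real.exp (k * β))
        (Real.exp (k * betaS q) * k) (betaS q) := h1.exp
    have h3' : HasDerivAt (fun β : ℝ => ((q:ℝ) - 1) * Real.exp (k * β))
        (((q:ℝ) - 1) * (Real.exp (k * betaS q) * k)) (betaS q) := h2.const_mul _
    have h4 : HasDerivAt (fun β : ℝ => 1 + ((q:ℝ) - 1) * Real.exp (k * β))
        (((q:ℝ) - 1) * (Real.exp (k * betaS q) * k)) (betaS q) := h3'.const_add 1
    have hdnz : 1 + ((q:ℝ) - 1) * Real.exp (k * betaS q) ≠ 0 :=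
      ne_of_gt (den_pos hq _)
    have h5 := h4.inv hdnz
    have h6 := h5.const_add (-sStar)
    rw [(show HasDerivAt (fun β => -sStar + (1 + ((q:ℝ) - 1) * Real.exp (k * β))⁻¹) _ (betaS q) from h6).deriv]
    have hd0 := den_pos hq (k * betaS q)
    have hE := Real.exp_pos (k * betaS q)
    apply div_pos _ (pow_pos hd0 2)
    have hAE : 0 < ((q:ℝ) - 1) * Real.exp (k * betaS q) := mul_pos hq1 hE
    nlinarith [mul_neg_of_pos_of_neg hAE hkneg]
  · -- part (ii)
    intro ρ hρ
    set K : Set ℝ := Set.Icc (1 / (q:ℝ) + ρ) 1 ∩ {s : ℝ | ρ ≤ |s - sStar|} with hK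
    have hKclosed : IsClosed K :=
      isClosed_Icc.inter (isClosed_le continuous_const ((continuous_id.sub continuous_const).abs))
    have hKcompact : IsCompact K :=
      IsCompact.of_isClosed_subset isCompact_Icc hKclosed (fun s hs => hs.1)
    by_cases hKne : K.Nonempty
    · obtain ⟨s0, hs0K, hmax⟩ := hKcompact.exists_isMaxOn hKne
        ((Dfun_cont_x hq (betaS q)).continuousOn)
      have hs0mem : s0 ∈ Set.Ioc (1 / (q:ℝ)) 1 :=
        ⟨lt_of_lt_of_le (by linarith) hs0K.1.1, hs0K.1.2⟩
      have hs0neg : Dfun q (betaS q) s0 < 0 := by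
        rcases lt_or_eq_of_le (Dfun_betaS_nonpos hq s0 hs0mem) with h | h
        · exact h
        · exfalso
          have := huniq s0 hs0mem h
          have h2 : ρ ≤ |s0 - sStar| := hs0K.2
          rw [this, sub_self, abs_zero] at h2
          linarith
      set c : ℝ := -(Dfun q (betaS q) s0) / 2 with hc
      have hc0 : 0 < c := by rw [hc]; linarith
      have hsubn : ({betaS q} : Set ℝ) ×ˢ K ⊆
          (fun p : ℝ × ℝ => Dfun q p.1 p.2) ⁻¹' Set.Iio (-c) := by
        rintro ⟨β, s⟩ ⟨hβ, hs⟩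
        rw [Set.mem_singleton_iff] at hβ
        subst hβ
        have hle : Dfun q (betaS q) s ≤ Dfun q (betaS q) s0 := hmax hs
        simp only [Set.mem_preimage, Set.mem_Iio]
        rw [hc]
        linarith
      obtain ⟨u, v, huo, hvo, hβu, hKv, huv⟩ :=
        generalized_tube_lemma isCompact_singleton hKcompact
          (isOpen_Iio.preimage (Dfun_cont hq)) hsubn
      obtain ⟨δ, hδ, hball⟩ := Metric.isOpen_iff.mp huo (betaS q) (hβu rfl)
      refine ⟨δ, c, hδ, hc0, ?_⟩
      intro β hβ s hs habs
      have hsK : s ∈ K := ⟨⟨le_of_lt hs.1, hs.2⟩, habs⟩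
      have hpmem : (β, s) ∈ u ×ˢ v :=
        ⟨hball (by rwa [Metric.mem_ball, Real.dist_eq]), hKv hsK⟩
      exact le_of_lt (huv hpmem)
    · refine ⟨1, 1, one_pos, one_pos, ?_⟩
      intro β hβ s hs habs
      exact absurd ⟨⟨le_of_lt hs.1, hs.2⟩, habs⟩ (fun h => hKne ⟨s, h⟩)
end

section
/- Let q ≥ 3 be an integer. For every β ≥ 0, (d/ds) D_β(s)|_{s=1/q} = −1 + 2β/q and (d²/ds²) D_β(s)|_{s=1/q} = 4β²(q−2)/(q(q−1)); in particular the second derivative at 1/q is strictly positive for β > 0. Consequently, β_s(q) < q/2. -/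
lemma Dfun_aux1 (Q β x : ℝ) (hQ : 3 ≤ Q) :
    HasDerivAt (fun x => -x + (1 + (Q - 1) * Real.exp (2 * β * (1 - Q * x) / (Q - 1)))⁻¹)
      (-1 + 2 * β * Q * Real.exp (2 * β * (1 - Q * x) / (Q - 1)) /
        (1 + (Q - 1) * Real.exp (2 * β * (1 - Q * x) / (Q - 1)))^2) x := by
  have hQ1 : (0:ℝ) < Q - 1 := by linarith
  have hE : HasDerivAt (fun x => 2 * β * (1 - Q * x) / (Q - 1))
      (2 * β * (0 - Q * 1) / (Q - 1)) x :=
    (((hasDerivAt_const x (1:ℝ)).sub ((hasDerivAt_id x).const_mul Q)).const_mul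
      (2*β)).div_const (Q-1)
  have hc : HasDerivAt (fun x => 1 + (Q - 1) * Real.exp (2 * β * (1 - Q * x) / (Q - 1)))
      ((Q - 1) * (Real.exp (2 * β * (1 - Q * x) / (Q - 1)) * (2 * β * (0 - Q * 1) / (Q - 1)))) x :=
    (hE.exp.const_mul (Q-1)).const_add 1
  have hpos : (0:ℝ) < 1 + (Q - 1) * Real.exp (2 * β * (1 - Q * x) / (Q - 1)) := by
    positivity
  have := ((hasDerivAt_id x).neg.add (hc.inv (ne_of_gt hpos)))
  refine this.congr_deriv ?_
  field_simp
  ring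

lemma Dfun_aux2 (Q β x : ℝ) (hQ : 3 ≤ Q) :
    HasDerivAt (fun x => -1 + 2 * β * Q * Real.exp (2 * β * (1 - Q * x) / (Q - 1)) /
        (1 + (Q - 1) * Real.exp (2 * β * (1 - Q * x) / (Q - 1)))^2)
      (2 * β * Q * (2 * β * (0 - Q * 1) / (Q - 1)) * Real.exp (2 * β * (1 - Q * x) / (Q - 1)) *
        (1 - (Q - 1) * Real.exp (2 * β * (1 - Q * x) / (Q - 1))) /
        (1 + (Q - 1) * Real.exp (2 * β * (1 - Q * x) / (Q - 1)))^3) x := by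
  have hQ1 : (0:ℝ) < Q - 1 := by linarith
  have hE : HasDerivAt (fun x => 2 * β * (1 - Q * x) / (Q - 1))
      (2 * β * (0 - Q * 1) / (Q - 1)) x :=
    (((hasDerivAt_const x (1:ℝ)).sub ((hasDerivAt_id x).const_mul Q)).const_mul
      (2*β)).div_const (Q-1)
  have hc : HasDerivAt (fun x => 1 + (Q - 1) * Real.exp (2 * β * (1 - Q * x) / (Q - 1)))
      ((Q - 1) * (Real.exp (2 * β * (1 - Q * x) / (Q - 1)) * (2 * β * (0 - Q * 1) / (Q - 1)))) x :=
    (hE.exp.const_mul (Q-1)).const_add 1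
  have hnum : HasDerivAt (fun x => 2 * β * Q * Real.exp (2 * β * (1 - Q * x) / (Q - 1)))
      (2 * β * Q * (Real.exp (2 * β * (1 - Q * x) / (Q - 1)) *
        (2 * β * (0 - Q * 1) / (Q - 1)))) x :=
    hE.exp.const_mul (2*β*Q)
  have hne : (1 + (Q - 1) * Real.exp (2 * β * (1 - Q * x) / (Q - 1)))^2 ≠ 0 := by positivity
  have := (hnum.div (hc.pow 2) hne).const_add (-1)
  refine this.congr_deriv ?_
  simp only [Pi.pow_apply]
  field_simp
  ring

/-- (From the proof of Proposition 5.1): for `q ≥ 3` and every `β ≥ 0`,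
`(d/ds) D_β(s)|_{s=1/q} = −1 + 2β/q` and
`(d²/ds²) D_β(s)|_{s=1/q} = 4β²(q−2)/(q(q−1))`, the latter being strictly
positive for `β > 0`; consequently `β_s(q) < q/2`. -/
theorem Dfun_derivs_at_equiproportion (q : ℕ) (hq : 3 ≤ q) :
    (∀ β : ℝ, 0 ≤ β →
      deriv (fun x => Dfun q β x) (1 / (q : ℝ)) = -1 + 2 * β / (q : ℝ) ∧
      deriv (deriv (fun x => Dfun q β x)) (1 / (q : ℝ)) =
        4 * β ^ 2 * ((q : ℝ) - 2) / ((q : ℝ) * ((q : ℝ) - 1)) ∧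
      (0 < β → 0 < deriv (deriv (fun x => Dfun q β x)) (1 / (q : ℝ)))) ∧
    betaS q < (q : ℝ) / 2 := by
  set Q : ℝ := (q : ℝ) with hQdef
  have hQ : (3:ℝ) ≤ Q := by rw [hQdef]; exact_mod_cast hq
  have hQ0 : (0:ℝ) < Q := by linarith
  have hQ1 : (0:ℝ) < Q - 1 := by linarith
  have hQ2 : (0:ℝ) < Q - 2 := by linarith
  have hE0 : ∀ β : ℝ, 2 * β * (1 - Q * (1/Q)) / (Q - 1) = 0 := by
    intro β; field_simp; ring
  constructor
  · intro β hβ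
    have hd2 : deriv (deriv (fun x => Dfun q β x)) (1 / Q) =
        4 * β ^ 2 * (Q - 2) / (Q * (Q - 1)) := by
      have hD' : deriv (fun x => Dfun q β x) =
          fun x => -1 + 2 * β * Q * Real.exp (2 * β * (1 - Q * x) / (Q - 1)) /
            (1 + (Q - 1) * Real.exp (2 * β * (1 - Q * x) / (Q - 1)))^2 :=
        funext fun x => (Dfun_aux1 Q β x hQ).deriv
      rw [hD', (Dfun_aux2 Q β (1/Q) hQ).deriv, hE0 β, Real.exp_zero]
      field_simp
      ring
    refine ⟨?_, hd2, ?_⟩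
    · have hval := (Dfun_aux1 Q β (1/Q) hQ).deriv
      rw [hE0 β, Real.exp_zero] at hval
      exact hval.trans (by field_simp; ring)
    · intro hβ'
      rw [hd2]
      apply div_pos (by nlinarith) (by nlinarith)
  · -- betaS q < Q / 2
    set R : ℝ := 2 * (Q - 1) / (Q - 2) with hRdef
    have hR1 : (1:ℝ) ≤ R := by
      rw [hRdef, le_div_iff₀ hQ2]; linarith
    have hRpos : (0:ℝ) < R := by linarith
    set β₀ : ℝ := (Q - 1) / 2 * Real.log R with hβ₀def
    -- main log inequality : β₀ < Q / 2
    have hβ₀lt : β₀ < Q / 2 := by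
      have hlogR : Real.log R < Q / (Q - 1) := by
        by_cases hq4 : 4 ≤ q
        · have hQ4 : (4:ℝ) ≤ Q := by rw [hQdef]; exact_mod_cast hq4
          have hsplit : R = 2 * ((Q - 1) / (Q - 2)) := by rw [hRdef]; ring
          have hlog2 : Real.log 2 < 0.6931471808 := Real.log_two_lt_d9
          have hfrac : Real.log ((Q - 1) / (Q - 2)) ≤ (Q - 1) / (Q - 2) - 1 :=
            Real.log_le_sub_one_of_pos (by positivity)
          have hmul : Real.log R = Real.log 2 + Real.log ((Q - 1) / (Q - 2)) := by
            rw [hsplit, Real.log_mul (by norm_num) (by positivity)]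
          rw [hmul]
          have hden : (0:ℝ) < (Q - 1) * (Q - 2) := by positivity
          have hkey : Real.log 2 + 1 / (Q - 2) < Q / (Q - 1) := by
            rw [show Real.log 2 + 1 / (Q - 2) =
                (Real.log 2 * ((Q - 1) * (Q - 2)) + (Q - 1)) / ((Q - 1) * (Q - 2)) from by
              field_simp,
              show Q / (Q - 1) = Q * (Q - 2) / ((Q - 1) * (Q - 2)) from by
              rw [div_eq_div_iff (ne_of_gt hQ1) (ne_of_gt hden)]; ring,
              div_lt_div_iff₀ hden hden]
            have hint := mul_lt_mul_of_pos_right hlog2 hden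
            nlinarith [mul_nonneg (by linarith : (0:ℝ) ≤ Q - 4) (by linarith : (0:ℝ) ≤ Q)]
          have hfrac2 : (Q - 1) / (Q - 2) - 1 = 1 / (Q - 2) := by
            field_simp
            try norm_num
          linarith
        · have hq3 : q = 3 := by omega
          have hQ3 : Q = 3 := by rw [hQdef, hq3]; norm_num
          have hR4 : R = 4 := by rw [hRdef, hQ3]; norm_num
          have hlog2 : Real.log 2 < 0.6931471808 := Real.log_two_lt_d9
          have h4 : Real.log 4 = 2 * Real.log 2 := by
            rw [show (4:ℝ) = 2^2 by norm_num, Real.log_pow]; push_cast; ring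
          rw [hR4, hQ3, h4]
          norm_num
          linarith
      calc β₀ = (Q - 1) / 2 * Real.log R := hβ₀def
        _ < (Q - 1) / 2 * (Q / (Q - 1)) := by
            apply mul_lt_mul_of_pos_left hlogR (by linarith)
        _ = Q / 2 := by field_simp
    -- every β ≥ β₀ has a zero of Dfun in (1/Q, 1)
    have hzero : ∀ β : ℝ, β₀ ≤ β → ∃ x ∈ Set.Ioo (1/Q) 1, Dfun q β x = 0 := by
      intro β hβ
      -- value at 2/Q is ≥ 0
      have hE2 : 2 * β * (1 - Q * (2/Q)) / (Q - 1) = -(2 * β / (Q - 1)) := by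
        field_simp; ring
      have hexp_le : Real.exp (-(2 * β / (Q - 1))) ≤ (Q - 2) / (2 * (Q - 1)) := by
        have h1 : Real.exp (-(2 * β / (Q - 1))) ≤ Real.exp (-(2 * β₀ / (Q - 1))) := by
          apply Real.exp_le_exp.mpr
          have : 2 * β₀ / (Q - 1) ≤ 2 * β / (Q - 1) := by
            gcongr
          linarith
        have h2 : -(2 * β₀ / (Q - 1)) = -Real.log R := by
          rw [hβ₀def]; field_simp
        have h3 : Real.exp (-Real.log R) = (Q - 2) / (2 * (Q - 1)) := by
          rw [Real.exp_neg, Real.exp_log hRpos, hRdef, inv_div]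
        rw [h2, h3] at h1
        exact h1
      have hcge : Dfun q β (2/Q) ≥ 0 := by
        have hc_le : 1 + (Q - 1) * Real.exp (2 * β * (1 - Q * (2/Q)) / (Q - 1)) ≤ Q / 2 := by
          rw [hE2]
          have := mul_le_mul_of_nonneg_left hexp_le (le_of_lt hQ1)
          have heq : (Q - 1) * ((Q - 2) / (2 * (Q - 1))) = (Q - 2) / 2 := by
            field_simp
          rw [heq] at this
          linarith
        have hcpos : (0:ℝ) < 1 + (Q - 1) * Real.exp (2 * β * (1 - Q * (2/Q)) / (Q - 1)) := by
          positivity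
        have hinv : (Q / 2)⁻¹ ≤ (1 + (Q - 1) * Real.exp (2 * β * (1 - Q * (2/Q)) / (Q - 1)))⁻¹ :=
          inv_anti₀ hcpos hc_le
        have h2Q : (Q / 2)⁻¹ = 2 / Q := by rw [inv_div]
        rw [h2Q] at hinv
        show 0 ≤ -(2/Q) + _
        linarith
      -- value at 1 is < 0
      have hlt1 : Dfun q β 1 < 0 := by
        have hcpos : (1:ℝ) < 1 + (Q - 1) * Real.exp (2 * β * (1 - Q * 1) / (Q - 1)) := by
          nlinarith [Real.exp_pos (2 * β * (1 - Q * 1) / (Q - 1))]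
        have := inv_lt_one_of_one_lt₀ hcpos
        show -1 + _ < 0
        linarith
      -- continuity
      have hdiff : Differentiable ℝ (fun x => Dfun q β x) :=
        fun x => (Dfun_aux1 Q β x hQ).differentiableAt
      have hcont : Continuous (fun x => Dfun q β x) := hdiff.continuous
      have h2Q1 : 2 / Q ≤ 1 := by
        rw [div_le_one hQ0]; linarith
      have := intermediate_value_Icc' h2Q1 hcont.continuousOn
        (Set.mem_Icc.mpr ⟨le_of_lt hlt1, hcge⟩)
      obtain ⟨x, hx, hfx⟩ := this
      refine ⟨x, ⟨?_, ?_⟩, hfx⟩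
      · have h12 : 1 / Q < 2 / Q := by
          rw [div_lt_div_iff₀ hQ0 hQ0]; linarith
        exact lt_of_lt_of_le h12 hx.1
      · rcases lt_or_eq_of_le hx.2 with h | h
        · exact h
        · exact absurd (h ▸ hfx : Dfun q β 1 = 0) (ne_of_lt hlt1)
    -- conclude
    have hS : ∀ b ∈ {β : ℝ | 0 ≤ β ∧ ∀ x ∈ Set.Ioo (1 / Q) 1, Dfun q β x ≠ 0}, b ≤ β₀ := by
      intro b hb
      by_contra h
      push_neg at h
      obtain ⟨x, hx, hfx⟩ := hzero b (le_of_lt h)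
      exact hb.2 x hx hfx
    have hne : {β : ℝ | 0 ≤ β ∧ ∀ x ∈ Set.Ioo (1 / Q) 1, Dfun q β x ≠ 0}.Nonempty := by
      refine ⟨0, le_refl 0, fun x hx => ?_⟩
      have hx1 : 1 / Q < x := hx.1
      have : Dfun q 0 x = -x + Q⁻¹ := by
        unfold Dfun
        rw [← hQdef, show 2 * (0:ℝ) * (1 - Q * x) / (Q - 1) = 0 from by ring,
          Real.exp_zero, mul_one, show (1:ℝ) + (Q - 1) = Q from by ring]
      rw [this]
      rw [one_div] at hx1
      intro hcon
      linarith
    calc betaS q ≤ β₀ := csSup_le hne hS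
      _ < Q / 2 := hβ₀lt
end
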